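/- Let s be a natural number, let v : {1,…,s+1} → ℝ and α : {1,…,s+1} × {1,…,s+1} → ℝ satisfy v_i ≥ 0, α_{ij} ≥ 0 (for j < i) and v_i + Σ_{j<i} α_{ij} = 1 for every i. Let b ≥ 0, c ≥ 0, T ≥ 0, h > 0 with h·(T + c) ≤ 1 and h·b ≤ 1, and let S⁰ ≥ 0, I⁰ ≥ 0, R⁰ ≥ 0. Define the stage values S_(i), I_(i), R_(i) by S_(i) = v_i·S⁰ + Σ_{j<i} α_{ij}·(S_(j) − h·(S_(j)·T + c·S_(j))), I_(i) = v_i·I⁰ + Σ_{j<i} α_{ij}·(I_(j) + h·(S_(j)·T − b·I_(j))), R_(i) = v_i·R⁰ + Σ_{j<i} α_{ij}·(R_(j) + h·(b·I_(j) + c·S_(j))). Then R_(i) ≥ R⁰ for every i ∈ {1,…,s+1}; in particular the next time-level value R_(s+1) satisfies R_(s+1) ≥ R⁰. -/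
import Mathlib


theorem stmt_15 (s : ℕ) (v : Fin (s + 1) → ℝ) (α : Fin (s + 1) → Fin (s + 1) → ℝ)
    (hv : ∀ i, 0 ≤ v i) (hα : ∀ i j, j < i → 0 ≤ α i j)
    (hcons : ∀ i, v i + ∑ j ∈ Finset.Iio i, α i j = 1)
    (b c T h : ℝ) (hb : 0 ≤ b) (hc : 0 ≤ c) (hT : 0 ≤ T) (hh : 0 < h)
    (hcond1 : h * (T + c) ≤ 1) (hcond2 : h * b ≤ 1)
    (S₀ I₀ R₀ : ℝ) (hS₀ : 0 ≤ S₀) (hI₀ : 0 ≤ I₀) (hR₀ : 0 ≤ R₀)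
    (S I R : Fin (s + 1) → ℝ)
    (hS : ∀ i, S i = v i * S₀ +
      ∑ j ∈ Finset.Iio i, α i j * (S j - h * (S j * T + c * S j)))
    (hI : ∀ i, I i = v i * I₀ +
      ∑ j ∈ Finset.Iio i, α i j * (I j + h * (S j * T - b * I j)))
    (hR : ∀ i, R i = v i * R₀ +
      ∑ j ∈ Finset.Iio i, α i j * (R j + h * (b * I j + c * S j))) :
    (∀ i, R₀ ≤ R i) ∧ R₀ ≤ R (Fin.last s) := by
  have key : ∀ i : Fin (s + 1), 0 ≤ S i ∧ 0 ≤ I i ∧ R₀ ≤ R i := by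
    have main : ∀ n : ℕ, ∀ i : Fin (s + 1), i.val = n → 0 ≤ S i ∧ 0 ≤ I i ∧ R₀ ≤ R i := by
      intro n
      induction n using Nat.strong_induction_on with
      | _ n ihn =>
      intro i hin
      have ih : ∀ j : Fin (s + 1), j < i → 0 ≤ S j ∧ 0 ≤ I j ∧ R₀ ≤ R j := by
        intro j hj
        exact ihn j.val (hin ▸ hj) j rfl
      have ihS : ∀ j ∈ Finset.Iio i, 0 ≤ S j := fun j hj =>
        (ih j (Finset.mem_Iio.mp hj)).1
      have ihI : ∀ j ∈ Finset.Iio i, 0 ≤ I j := fun j hj =>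
        (ih j (Finset.mem_Iio.mp hj)).2.1
      have ihR : ∀ j ∈ Finset.Iio i, R₀ ≤ R j := fun j hj =>
        (ih j (Finset.mem_Iio.mp hj)).2.2
      refine ⟨?_, ?_, ?_⟩
      · rw [hS i]
        have : ∀ j ∈ Finset.Iio i, 0 ≤ α i j * (S j - h * (S j * T + c * S j)) := by
          intro j hj
          apply mul_nonneg (hα i j (Finset.mem_Iio.mp hj))
          have : S j - h * (S j * T + c * S j) = S j * (1 - h * (T + c)) := by ring
          rw [this]
          exact mul_nonneg (ihS j hj) (by linarith)
        have := Finset.sum_nonneg this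
        have := mul_nonneg (hv i) hS₀
        linarith
      · rw [hI i]
        have : ∀ j ∈ Finset.Iio i, 0 ≤ α i j * (I j + h * (S j * T - b * I j)) := by
          intro j hj
          apply mul_nonneg (hα i j (Finset.mem_Iio.mp hj))
          have : I j + h * (S j * T - b * I j) = I j * (1 - h * b) + h * (S j * T) := by ring
          rw [this]
          have h1 : 0 ≤ I j * (1 - h * b) := mul_nonneg (ihI j hj) (by linarith)
          have h2 : 0 ≤ h * (S j * T) :=
            mul_nonneg hh.le (mul_nonneg (ihS j hj) hT)
          linarith
        have := Finset.sum_nonneg this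
        have := mul_nonneg (hv i) hI₀
        linarith
      · rw [hR i]
        have hterm : ∀ j ∈ Finset.Iio i,
            α i j * R₀ ≤ α i j * (R j + h * (b * I j + c * S j)) := by
          intro j hj
          apply mul_le_mul_of_nonneg_left _ (hα i j (Finset.mem_Iio.mp hj))
          have h2 : 0 ≤ h * (b * I j + c * S j) :=
            mul_nonneg hh.le
              (add_nonneg (mul_nonneg hb (ihI j hj)) (mul_nonneg hc (ihS j hj)))
          have := ihR j hj
          linarith
        have hsum := Finset.sum_le_sum hterm
        have heq : v i * R₀ + ∑ j ∈ Finset.Iio i, α i j * R₀ = R₀ := by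
          rw [← Finset.sum_mul]
          have := hcons i
          nlinarith [hcons i]
        calc R₀ = v i * R₀ + ∑ j ∈ Finset.Iio i, α i j * R₀ := heq.symm
          _ ≤ _ := by linarith
    exact fun i => main i.val i rfl
  exact ⟨fun i => (key i).2.2, (key (Fin.last s)).2.2⟩
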